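/- Let $N$ be a normal subgroup of a finite group $G$ and $r \geq 2$. Then $\mathrm{Prob}_r(G) \leq \mathrm{Prob}_r(G/N)$, i.e., $|G^r|/|G| \leq |(G/N)^r|/|G/N|$. -/
import Mathlib

lemma preimage_card_aux {G : Type*} [Group G] (N : Subgroup G) [N.Normal]
    (S : Set (G ⧸ N)) :
    Nat.card ((QuotientGroup.mk' N) ⁻¹' S) = Nat.card S * Nat.card N := by
  have : ((QuotientGroup.mk' N) ⁻¹' S) ≃ S × N := by
    refine
      { toFun := fun x => (⟨QuotientGroup.mk' N x.1, x.2⟩,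
          ⟨(Quotient.out (QuotientGroup.mk' N x.1 : G ⧸ N))⁻¹ * x.1, ?_⟩),
        invFun := fun p => ⟨Quotient.out (p.1 : G ⧸ N) * (p.2 : G), ?_⟩,
        left_inv := ?_, right_inv := ?_ }
    · rw [← QuotientGroup.eq_one_iff]
      simp [QuotientGroup.mk'_apply]
    · have hS := p.1.2
      simp only [Set.mem_preimage]
      have : (QuotientGroup.mk' N) (Quotient.out (p.1 : G ⧸ N) * (p.2 : G))
          = (p.1 : G ⧸ N) := by
        have h2 : (QuotientGroup.mk' N) (p.2 : G) = 1 := by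
          rw [QuotientGroup.mk'_apply, QuotientGroup.eq_one_iff]; exact p.2.2
        simp [map_mul, h2, QuotientGroup.mk'_apply]
      rw [this]; exact hS
    · intro x
      ext
      simp
    · intro p
      obtain ⟨⟨s, hs⟩, ⟨n, hn⟩⟩ := p
      have key : (QuotientGroup.mk' N) (Quotient.out s * n) = s := by
        have h2 : (QuotientGroup.mk' N) n = 1 := by
          rw [QuotientGroup.mk'_apply, QuotientGroup.eq_one_iff]; exact hn
        simp [map_mul, h2, QuotientGroup.mk'_apply]
      ext
      · exact key
      · simp only [key]
        group
  rw [Nat.card_congr this, Nat.card_prod]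

theorem stmt_12 (G : Type*) [Group G] [Fintype G] (N : Subgroup G) [N.Normal]
    (r : ℕ) (hr : 2 ≤ r) :
    (Set.ncard {x : G | ∃ g : G, g ^ r = x} : ℝ) / (Nat.card G : ℝ) ≤
      (Set.ncard {x : G ⧸ N | ∃ g : G ⧸ N, g ^ r = x} : ℝ) / (Nat.card (G ⧸ N) : ℝ) := by
  set S : Set (G ⧸ N) := {x : G ⧸ N | ∃ g : G ⧸ N, g ^ r = x} with hS
  have hsub : {x : G | ∃ g : G, g ^ r = x} ⊆ (QuotientGroup.mk' N) ⁻¹' S := by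
    rintro x ⟨g, rfl⟩
    exact ⟨QuotientGroup.mk' N g, by simp [map_pow]⟩
  have hfin : ((QuotientGroup.mk' N) ⁻¹' S).Finite := Set.toFinite _
  have hcard1 : Set.ncard {x : G | ∃ g : G, g ^ r = x} ≤ Nat.card S * Nat.card N := by
    calc Set.ncard {x : G | ∃ g : G, g ^ r = x}
        ≤ Set.ncard ((QuotientGroup.mk' N) ⁻¹' S) := Set.ncard_le_ncard hsub hfin
      _ = Nat.card ((QuotientGroup.mk' N) ⁻¹' S) := (Nat.card_coe_set_eq _).symm
      _ = Nat.card S * Nat.card N := preimage_card_aux N S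
  have hG : Nat.card G = Nat.card (G ⧸ N) * Nat.card N :=
    Subgroup.card_eq_card_quotient_mul_card_subgroup N
  have hNpos : 0 < (Nat.card N : ℝ) := by
    exact_mod_cast Nat.card_pos
  have hQpos : 0 < (Nat.card (G ⧸ N) : ℝ) := by
    exact_mod_cast Nat.card_pos
  have hSn : (Set.ncard S : ℝ) = (Nat.card S : ℝ) := by
    rw [Nat.card_coe_set_eq]
  rw [hG]
  push_cast
  rw [div_le_div_iff₀ (by positivity) hQpos]
  have h1 : (Set.ncard {x : G | ∃ g : G, g ^ r = x} : ℝ) ≤ Nat.card S * Nat.card N := by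
    exact_mod_cast hcard1
  calc (Set.ncard {x : G | ∃ g : G, g ^ r = x} : ℝ) * Nat.card (G ⧸ N)
      ≤ (Nat.card S * Nat.card N) * Nat.card (G ⧸ N) := by
        exact mul_le_mul_of_nonneg_right h1 hQpos.le
    _ = (Set.ncard S : ℝ) * (Nat.card (G ⧸ N) * Nat.card N) := by rw [hSn]; ring
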